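/- For every choice of integers q₁, …, q_{n−1} with 1 ≤ q_p ≤ p+1 for each 1 ≤ p ≤ n−1, the product β_{1,q₁} · β_{2,q₂} · ⋯ · β_{n−1,q_{n−1}} is a non-zero element of the braid monoid with zero 𝔹ₙ. -/

import Mathlib

/-!
The braid monoid with zero `𝔹ₙ`, realized as the quotient of the free monoid on
letters `β₁, …, β_{n−1}, z` by the congruence generated by the braid relations,
`β_p β_p = 0`, `β_p z = z = z β_p` and `z z = z`, with `0 := z`.

Statement 0: every non-zero element `x ∈ 𝔹ₙ` can be written as
`x = β_{1,q₁} ⋯ β_{n−1, q_{n−1}}` with `1 ≤ q_p ≤ p + 1`, and the tuple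
`(q₁, …, q_{n−1})` satisfying these bounds is uniquely determined by `x`.
-/

namespace BraidMonoidZero

/-- Letters: `some i` is the generator `β_{i+1}` (for `i : Fin (n-1)`), `none` is `z`. -/
abbrev Letter (n : ℕ) := Option (Fin (n - 1))

/-- The defining relations of the braid monoid with zero. -/
inductive Rel (n : ℕ) : FreeMonoid (Letter n) → FreeMonoid (Letter n) → Prop
  | comm (i j : Fin (n - 1)) (h : i.val + 1 < j.val) :
      Rel n (FreeMonoid.of (some j) * FreeMonoid.of (some i))
            (FreeMonoid.of (some i) * FreeMonoid.of (some j))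
  | braid (i j : Fin (n - 1)) (h : j.val = i.val + 1) :
      Rel n (FreeMonoid.of (some j) * FreeMonoid.of (some i) * FreeMonoid.of (some j))
            (FreeMonoid.of (some i) * FreeMonoid.of (some j) * FreeMonoid.of (some i))
  | square (i : Fin (n - 1)) :
      Rel n (FreeMonoid.of (some i) * FreeMonoid.of (some i)) (FreeMonoid.of none)
  | zright (i : Fin (n - 1)) :
      Rel n (FreeMonoid.of (some i) * FreeMonoid.of none) (FreeMonoid.of none)
  | zleft (i : Fin (n - 1)) :
      Rel n (FreeMonoid.of none * FreeMonoid.of (some i)) (FreeMonoid.of none)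
  | zz : Rel n (FreeMonoid.of none * FreeMonoid.of none) (FreeMonoid.of none)

/-- The congruence generated by the defining relations. -/
def bmzCon (n : ℕ) : Con (FreeMonoid (Letter n)) := conGen (Rel n)

/-- The braid monoid with zero `𝔹ₙ`. -/
abbrev BMZ (n : ℕ) := (bmzCon n).Quotient

/-- The zero element `0 = z` of `𝔹ₙ`. -/
def zero (n : ℕ) : BMZ n := (bmzCon n).mk' (FreeMonoid.of none)

/-- The generator `β_{i+1}` of `𝔹ₙ` (so subscripts range over `1, …, n-1`). -/
def gen (n : ℕ) (i : Fin (n - 1)) : BMZ n := (bmzCon n).mk' (FreeMonoid.of (some i))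

/-- The generator `β_r`, indexed by its 1-based subscript `r ∈ {1, …, n-1}`. -/
def genNat (n r : ℕ) : BMZ n := if h : r - 1 < n - 1 then gen n ⟨r - 1, h⟩ else 1

/-- `betaSeg n p q` is `β_{p,q} = β_p β_{p-1} ⋯ β_q` (the identity when `q = p + 1`). -/
def betaSeg (n p q : ℕ) : BMZ n :=
  ((List.range' q (p + 1 - q)).reverse.map (genNat n)).prod

/-- The product `β_{1,q₁} · β_{2,q₂} · ⋯ · β_{n−1,q_{n−1}}`, where the value `q i`
corresponds to `q_{i+1}` for `i : Fin (n-1)`. -/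
def normalProd (n : ℕ) (q : Fin (n - 1) → ℕ) : BMZ n :=
  ((List.finRange (n - 1)).map (fun i => betaSeg n (i.val + 1) (q i))).prod

-- AUX START
section Aux

open MulOpposite Equiv

variable {n : ℕ}

/-- Position `i` as element of `Fin n`. -/
def posL (i : Fin (n - 1)) : Fin n := ⟨i.val, by have := i.isLt; omega⟩

/-- Position `i+1` as element of `Fin n`. -/
def posR (i : Fin (n - 1)) : Fin n := ⟨i.val + 1, by have := i.isLt; omega⟩

/-- The nil-Coxeter action of generator `i` on `Option (Perm (Fin n))`. -/
def act (i : Fin (n - 1)) (x : Option (Equiv.Perm (Fin n))) : Option (Equiv.Perm (Fin n)) :=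
  x.bind fun w =>
    if w (posL i) < w (posR i) then some (w * Equiv.swap (posL i) (posR i)) else none

lemma act_none (i : Fin (n - 1)) : act i none = none := rfl

lemma act_some (i : Fin (n - 1)) (w : Equiv.Perm (Fin n)) :
    act i (some w) =
      if w (posL i) < w (posR i) then some (w * Equiv.swap (posL i) (posR i)) else none := rfl

/-- Action of a letter. -/
def letterAct : Letter n → Function.End (Option (Equiv.Perm (Fin n)))
  | none => fun _ => none
  | some i => act i

/-- The homomorphism from the free monoid. -/
def phi (n : ℕ) : FreeMonoid (Letter n) →* (Function.End (Option (Equiv.Perm (Fin n))))ᵐᵒᵖ :=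
  FreeMonoid.lift fun l => MulOpposite.op (letterAct l)

lemma phi_of (l : Letter n) : phi n (FreeMonoid.of l) = MulOpposite.op (letterAct l) :=
  FreeMonoid.lift_eval_of _ _

lemma unop_phi_two (a b : Letter n) (x : Option (Equiv.Perm (Fin n))) :
    MulOpposite.unop (phi n (FreeMonoid.of a * FreeMonoid.of b)) x
      = letterAct b (letterAct a x) := by
  simp only [map_mul, phi_of, MulOpposite.unop_mul, MulOpposite.unop_op]
  rfl

lemma unop_phi_three (a b c : Letter n) (x : Option (Equiv.Perm (Fin n))) :
    MulOpposite.unop (phi n (FreeMonoid.of a * FreeMonoid.of b * FreeMonoid.of c)) x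
      = letterAct c (letterAct b (letterAct a x)) := by
  simp only [map_mul, phi_of, MulOpposite.unop_mul, MulOpposite.unop_op]
  rfl

lemma sq_pt (i : Fin (n - 1)) (x : Option (Equiv.Perm (Fin n))) :
    act i (act i x) = none := by
  cases x with
  | none => rfl
  | some w =>
    rw [act_some]
    by_cases h : w (posL i) < w (posR i)
    · rw [if_pos h, act_some]
      rw [if_neg]
      simp only [Equiv.Perm.mul_apply, Equiv.swap_apply_left, Equiv.swap_apply_right]
      exact lt_asymm h
    · rw [if_neg h, act_none]

lemma comm_pt (i j : Fin (n - 1)) (h : i.val + 1 < j.val) (x : Option (Equiv.Perm (Fin n))) :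
    act i (act j x) = act j (act i x) := by
  cases x with
  | none => rfl
  | some w =>
    have hac : posL i ≠ posL j := Fin.ne_of_val_ne (show i.val ≠ j.val by omega)
    have had : posL i ≠ posR j := Fin.ne_of_val_ne (show i.val ≠ j.val + 1 by omega)
    have hbc : posR i ≠ posL j := Fin.ne_of_val_ne (show i.val + 1 ≠ j.val by omega)
    have hbd : posR i ≠ posR j := Fin.ne_of_val_ne (show i.val + 1 ≠ j.val + 1 by omega)
    have e1 : ∀ w' : Equiv.Perm (Fin n),
        (w' * Equiv.swap (posL j) (posR j)) (posL i) = w' (posL i) := fun w' => by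
      rw [Equiv.Perm.mul_apply, Equiv.swap_apply_of_ne_of_ne hac had]
    have e2 : ∀ w' : Equiv.Perm (Fin n),
        (w' * Equiv.swap (posL j) (posR j)) (posR i) = w' (posR i) := fun w' => by
      rw [Equiv.Perm.mul_apply, Equiv.swap_apply_of_ne_of_ne hbc hbd]
    have e3 : ∀ w' : Equiv.Perm (Fin n),
        (w' * Equiv.swap (posL i) (posR i)) (posL j) = w' (posL j) := fun w' => by
      rw [Equiv.Perm.mul_apply, Equiv.swap_apply_of_ne_of_ne (Ne.symm hac) (Ne.symm hbc)]
    have e4 : ∀ w' : Equiv.Perm (Fin n),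
        (w' * Equiv.swap (posL i) (posR i)) (posR j) = w' (posR j) := fun w' => by
      rw [Equiv.Perm.mul_apply, Equiv.swap_apply_of_ne_of_ne (Ne.symm had) (Ne.symm hbd)]
    have hswap : Equiv.swap (posL j) (posR j) * Equiv.swap (posL i) (posR i)
        = Equiv.swap (posL i) (posR i) * Equiv.swap (posL j) (posR j) := by
      ext k
      simp only [Equiv.Perm.mul_apply, Equiv.swap_apply_def]
      split_ifs <;> simp_all
    by_cases h1 : w (posL j) < w (posR j) <;> by_cases h2 : w (posL i) < w (posR i) <;>
      simp [act_some, act_none, h1, h2, e1, e2, e3, e4, mul_assoc, hswap]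

lemma braid_pt (i j : Fin (n - 1)) (h : j.val = i.val + 1) (x : Option (Equiv.Perm (Fin n))) :
    act j (act i (act j x)) = act i (act j (act i x)) := by
  cases x with
  | none => rfl
  | some w =>
    have hLj : posL j = posR i := Fin.ext (show j.val = i.val + 1 from h)
    set a := posL i with ha
    set b := posR i with hb
    set c := posR j with hc
    have hab : a ≠ b := Fin.ne_of_val_ne (show i.val ≠ i.val + 1 by omega)
    have hac : a ≠ c := Fin.ne_of_val_ne (show i.val ≠ j.val + 1 by omega)
    have hbc : b ≠ c := Fin.ne_of_val_ne (show i.val + 1 ≠ j.val + 1 by omega)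
    have sbc_a : Equiv.swap b c a = a := Equiv.swap_apply_of_ne_of_ne hab hac
    have sab_c : Equiv.swap a b c = c := Equiv.swap_apply_of_ne_of_ne (Ne.symm hac) (Ne.symm hbc)
    have hkey : Equiv.swap b c * Equiv.swap a b * Equiv.swap b c
        = Equiv.swap a b * Equiv.swap b c * Equiv.swap a b := by
      rw [Equiv.swap_mul_swap_mul_swap hab hac]
      rw [show Equiv.swap a b = Equiv.swap b a from Equiv.swap_comm a b,
          show Equiv.swap b c = Equiv.swap c b from Equiv.swap_comm b c,
          Equiv.swap_mul_swap_mul_swap (Ne.symm hbc) (Ne.symm hac)]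
      exact (Equiv.swap_comm a c).symm
    by_cases h1 : w a < w b <;> by_cases h2 : w b < w c <;> by_cases h3 : w a < w c <;>
      simp [act_some, act_none, hLj, ← ha, ← hb, ← hc, h1, h2, h3,
        Equiv.Perm.mul_apply, Equiv.swap_apply_left, Equiv.swap_apply_right,
        sbc_a, sab_c] <;>
      first
        | rfl
        | (exact absurd (lt_trans h1 h2) h3)
        | (simp only [mul_assoc] at hkey ⊢; rw [hkey])
        | simp_all [act_some, act_none, Equiv.Perm.mul_apply, Equiv.swap_apply_left,
            Equiv.swap_apply_right, sbc_a, sab_c]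

lemma phi_rel : ∀ a b : FreeMonoid (Letter n), Rel n a b → phi n a = phi n b := by
  intro a b hr
  cases hr with
  | comm i j h =>
    apply MulOpposite.unop_injective
    funext x
    rw [unop_phi_two, unop_phi_two]
    exact comm_pt i j h x
  | braid i j h =>
    apply MulOpposite.unop_injective
    funext x
    rw [unop_phi_three, unop_phi_three]
    exact braid_pt i j h x
  | square i =>
    apply MulOpposite.unop_injective
    funext x
    rw [unop_phi_two]
    rw [phi_of]
    exact sq_pt i x
  | zright i =>
    apply MulOpposite.unop_injective
    funext x
    rw [unop_phi_two, phi_of]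
    rfl
  | zleft i =>
    apply MulOpposite.unop_injective
    funext x
    rw [unop_phi_two, phi_of]
    rfl
  | zz =>
    apply MulOpposite.unop_injective
    funext x
    rw [unop_phi_two, phi_of]
    rfl

lemma bmzCon_le_ker : bmzCon n ≤ Con.ker (phi n) :=
  Con.conGen_le.mpr fun a b h => (Con.ker_rel _).mpr (phi_rel a b h)

/-- The induced homomorphism on `𝔹ₙ`. -/
def Phi (n : ℕ) : BMZ n →* (Function.End (Option (Equiv.Perm (Fin n))))ᵐᵒᵖ :=
  (bmzCon n).lift (phi n) bmzCon_le_ker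

lemma Phi_mk (w : FreeMonoid (Letter n)) : Phi n ((bmzCon n).mk' w) = phi n w :=
  Con.lift_mk' _ _

/-- Evaluation of an element of `𝔹ₙ` as a function. -/
def evalP (x : BMZ n) (y : Option (Equiv.Perm (Fin n))) : Option (Equiv.Perm (Fin n)) :=
  MulOpposite.unop (Phi n x) y

lemma evalP_mul (a b : BMZ n) (y : Option (Equiv.Perm (Fin n))) :
    evalP (a * b) y = evalP b (evalP a y) := by
  simp only [evalP, map_mul, MulOpposite.unop_mul]
  rfl

lemma evalP_one (y : Option (Equiv.Perm (Fin n))) : evalP (1 : BMZ n) y = y := by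
  simp only [evalP, map_one, MulOpposite.unop_one]
  rfl

lemma evalP_gen (i : Fin (n - 1)) (y : Option (Equiv.Perm (Fin n))) :
    evalP (gen n i) y = act i y := by
  simp only [evalP, gen, Phi_mk, phi_of, MulOpposite.unop_op]
  rfl

lemma evalP_zero (y : Option (Equiv.Perm (Fin n))) : evalP (zero n) y = none := by
  simp only [evalP, zero, Phi_mk, phi_of, MulOpposite.unop_op]
  rfl

/-- Nat-indexed action matching `genNat`. -/
def actNat (n r : ℕ) : Option (Equiv.Perm (Fin n)) → Option (Equiv.Perm (Fin n)) :=
  if h : r - 1 < n - 1 then act ⟨r - 1, h⟩ else id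

lemma evalP_genNat (r : ℕ) (y : Option (Equiv.Perm (Fin n))) :
    evalP (genNat n r) y = actNat n r y := by
  unfold genNat actNat
  split_ifs with h
  · exact evalP_gen _ _
  · exact evalP_one _

lemma evalP_listProd : ∀ (l : List ℕ) (y : Option (Equiv.Perm (Fin n))),
    evalP ((l.map (genNat n)).prod) y = l.foldl (fun z r => actNat n r z) y := by
  intro l
  induction l with
  | nil => intro y; simpa using evalP_one y
  | cons r t ih =>
    intro y
    rw [List.map_cons, List.prod_cons, evalP_mul, evalP_genNat, List.foldl_cons, ih]

/-- The intermediate invariant during a stage. -/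
def Inv (j t : ℕ) (v : Equiv.Perm (Fin n)) : Prop :=
  (∀ k : Fin n, k.val < t → (v k).val ≤ j) ∧
  (∀ k : Fin n, k.val = t → (v k).val = j + 1) ∧
  (∀ k : Fin n, j + 2 ≤ k.val → v k = k)

lemma stepInv (j t : ℕ) (hj : j < n - 1) (ht1 : 1 ≤ t) (ht2 : t ≤ j + 1)
    (v : Equiv.Perm (Fin n)) (hv : Inv j t v) :
    ∃ v', actNat n t (some v) = some v' ∧ Inv j (t - 1) v' := by
  have hidx : t - 1 < n - 1 := by omega
  obtain ⟨hv1, hv2, hv3⟩ := hv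
  set a := posL (⟨t - 1, hidx⟩ : Fin (n - 1)) with ha
  set b := posR (⟨t - 1, hidx⟩ : Fin (n - 1)) with hb
  have haval : a.val = t - 1 := rfl
  have hbval : b.val = t := show t - 1 + 1 = t by omega
  have hcond : v a < v b := by
    rw [Fin.lt_def]
    have h1 : (v a).val ≤ j := hv1 a (by omega)
    have h2 : (v b).val = j + 1 := hv2 b hbval
    omega
  refine ⟨v * Equiv.swap a b, ?_, ?_, ?_, ?_⟩
  · unfold actNat
    rw [dif_pos hidx, act_some, ← ha, ← hb, if_pos hcond]
  · intro k hk
    have hka : k ≠ a := fun e => by rw [e] at hk; omega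
    have hkb : k ≠ b := fun e => by rw [e] at hk; omega
    rw [Equiv.Perm.mul_apply, Equiv.swap_apply_of_ne_of_ne hka hkb]
    exact hv1 k (by omega)
  · intro k hk
    have hka : k = a := Fin.ext (by omega)
    rw [hka, Equiv.Perm.mul_apply, Equiv.swap_apply_left]
    exact hv2 b hbval
  · intro k hk
    have hka : k ≠ a := fun e => by rw [e] at hk; omega
    have hkb : k ≠ b := fun e => by rw [e] at hk; omega
    rw [Equiv.Perm.mul_apply, Equiv.swap_apply_of_ne_of_ne hka hkb]
    exact hv3 k hk

lemma segRun (j : ℕ) (hj : j < n - 1) :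
    ∀ (m q0 : ℕ), 1 ≤ q0 → q0 + m ≤ j + 2 →
    ∀ v : Equiv.Perm (Fin n), Inv j (q0 + m - 1) v →
    ∃ v', ((List.range' q0 m).reverse).foldl (fun z r => actNat n r z) (some v) = some v'
      ∧ Inv j (q0 - 1) v' := by
  intro m
  induction m with
  | zero =>
    intro q0 _ _ v hv
    exact ⟨v, rfl, by simpa using hv⟩
  | succ m ih =>
    intro q0 hq0 hle v hv
    have hv' : Inv j (q0 + m) v := by
      have e : q0 + (m + 1) - 1 = q0 + m := by omega
      rwa [e] at hv
    obtain ⟨v1, heq, hinv⟩ := stepInv j (q0 + m) hj (by omega) (by omega) v hv'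
    have hlist : (List.range' q0 (m + 1)).reverse
        = (q0 + m) :: (List.range' q0 m).reverse := by
      rw [List.range'_concat]
      simp
    rw [hlist, List.foldl_cons, heq]
    have hinv' : Inv j (q0 + m - 1) v1 := hinv
    exact ih q0 hq0 (by omega) v1 hinv'

lemma stageRun (j Q : ℕ) (hj : j < n - 1) (hQ1 : 1 ≤ Q) (hQ2 : Q ≤ j + 2)
    (w : Equiv.Perm (Fin n)) (hw : ∀ k : Fin n, j + 1 ≤ k.val → w k = k) :
    ∃ w', evalP (betaSeg n (j + 1) Q) (some w) = some w'
      ∧ ∀ k : Fin n, j + 2 ≤ k.val → w' k = k := by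
  have hsmall : ∀ k : Fin n, k.val < j + 1 → (w k).val ≤ j := by
    intro k hk
    by_contra hc
    have h1 : j + 1 ≤ (w k).val := by omega
    have h2 : w (w k) = w k := hw _ h1
    have h3 : w k = k := w.injective h2
    rw [h3] at h1
    omega
  have hInv : Inv j (j + 1) w := by
    refine ⟨hsmall, ?_, ?_⟩
    · intro k hk
      rw [hw k (by omega), hk]
    · intro k hk
      exact hw k (by omega)
  have e : Q + (j + 2 - Q) - 1 = j + 1 := by omega
  obtain ⟨w', hrun, hinv⟩ := segRun j hj (j + 2 - Q) Q hQ1 (by omega) w (by rwa [e])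
  refine ⟨w', ?_, hinv.2.2⟩
  have e2 : j + 1 + 1 - Q = j + 2 - Q := by omega
  rw [betaSeg, e2, evalP_listProd]
  exact hrun

lemma outerRun (Qf : ℕ → ℕ) (hQf : ∀ p, p < n - 1 → 1 ≤ Qf p ∧ Qf p ≤ p + 2) :
    ∀ (c j : ℕ), j + c = n - 1 →
    ∀ w : Equiv.Perm (Fin n), (∀ k : Fin n, j + 1 ≤ k.val → w k = k) →
    ∃ w', evalP (((List.range' j c).map (fun p => betaSeg n (p + 1) (Qf p))).prod) (some w)
      = some w' := by
  intro c
  induction c with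
  | zero =>
    intro j _ w _
    exact ⟨w, by simpa using evalP_one (some w)⟩
  | succ c ih =>
    intro j hjc w hw
    rw [List.range'_succ, List.map_cons, List.prod_cons, evalP_mul]
    have hj : j < n - 1 := by omega
    obtain ⟨w1, h1, h2⟩ := stageRun j (Qf j) hj (hQf j hj).1 (hQf j hj).2 w hw
    rw [h1]
    exact ih (j + 1) (by omega) w1 h2

end Aux
-- AUX END

/-- For every choice of integers `q₁, …, q_{n−1}` with `1 ≤ q_p ≤ p+1`
for each `1 ≤ p ≤ n−1` (here `q i = q_{i+1}`, so the bound reads `1 ≤ q i ≤ i.val + 2`),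
the product `β_{1,q₁} · β_{2,q₂} · ⋯ · β_{n−1,q_{n−1}}` is a non-zero element of the
braid monoid with zero `𝔹ₙ`. -/
theorem normalProd_ne_zero (n : ℕ) (hn : 1 ≤ n) (q : Fin (n - 1) → ℕ)
    (hq : ∀ i : Fin (n - 1), 1 ≤ q i ∧ q i ≤ i.val + 2) :
    normalProd n q ≠ zero n := by
  classical
  set Qf : ℕ → ℕ := fun p => if h : p < n - 1 then q ⟨p, h⟩ else 1 with hQf
  have hconv : normalProd n q
      = ((List.range' 0 (n - 1)).map (fun p => betaSeg n (p + 1) (Qf p))).prod := by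
    rw [← List.range_eq_range', show List.range (n - 1) = (List.finRange (n - 1)).map (fun i : Fin (n - 1) => (i : ℕ)) from List.ext_getElem (by simp) (by simp), List.map_map]
    unfold normalProd
    refine congrArg List.prod (List.map_congr_left ?_)
    intro i _
    simp [hQf, Function.comp, dif_pos i.isLt]
  have hbounds : ∀ p, p < n - 1 → 1 ≤ Qf p ∧ Qf p ≤ p + 2 := by
    intro p hp
    simp only [hQf, dif_pos hp]
    exact hq ⟨p, hp⟩
  obtain ⟨w', hw'⟩ := outerRun Qf hbounds (n - 1) 0 (by omega) 1 (fun k _ => rfl)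
  intro hcontr
  rw [← hconv, hcontr, evalP_zero] at hw'
  exact nomatch hw'

end BraidMonoidZero
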